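/- Let A be an arithmetical algebra. Then the following are equivalent: A has the FCLP; A has the CBLP; A is FC-normal; A is B-normal. -/

import Mathlib

/-! Universal-algebra framework: algebras over a signature, congruences,
factor congruences, lifting properties. -/

structure Signature where
  ops : Type
  arity : ops → ℕ

structure Alg (σ : Signature) where
  carrier : Type
  interp : ∀ f : σ.ops, (Fin (σ.arity f) → carrier) → carrier

namespace Alg

variable {σ : Signature}

/-- A congruence: an equivalence relation compatible with all operations. -/
def IsCon (A : Alg σ) (r : A.carrier → A.carrier → Prop) : Prop :=
  Equivalence r ∧
    ∀ (f : σ.ops) (x y : Fin (σ.arity f) → A.carrier),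
      (∀ i, r (x i) (y i)) → r (A.interp f x) (A.interp f y)

/-- The least congruence `Δ_A`. -/
def delta (A : Alg σ) : A.carrier → A.carrier → Prop := fun a b => a = b

/-- The greatest congruence `∇_A = A²`. -/
def nabla (A : Alg σ) : A.carrier → A.carrier → Prop := fun _ _ => True

/-- Meet (intersection) of congruences. -/
def conMeet (A : Alg σ) (r s : A.carrier → A.carrier → Prop) :
    A.carrier → A.carrier → Prop := fun a b => r a b ∧ s a b

/-- Join of congruences: the least congruence containing both. -/
def conJoin (A : Alg σ) (r s : A.carrier → A.carrier → Prop) :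
    A.carrier → A.carrier → Prop := fun a b =>
  ∀ t, A.IsCon t → (∀ x y, r x y → t x y) → (∀ x y, s x y → t x y) → t a b

/-- The congruence generated by a set of pairs. -/
def conGen (A : Alg σ) (X : Set (A.carrier × A.carrier)) :
    A.carrier → A.carrier → Prop := fun a b =>
  ∀ t, A.IsCon t → (∀ p ∈ X, t p.1 p.2) → t a b

/-- Composition of relations: `(a,b) ∈ comp r s` iff `(a,x) ∈ s` and `(x,b) ∈ r`
for some `x`. -/
def comp (A : Alg σ) (r s : A.carrier → A.carrier → Prop) :
    A.carrier → A.carrier → Prop := fun a b => ∃ x, s a x ∧ r x b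

/-- Factor congruences: congruences `φ` having a congruence `φ*` with
`φ ∨ φ* = ∇`, `φ ∩ φ* = Δ` and `φ ∘ φ* = φ* ∘ φ`. -/
def IsFC (A : Alg σ) (φ : A.carrier → A.carrier → Prop) : Prop :=
  A.IsCon φ ∧ ∃ ψ, A.IsCon ψ ∧ A.conJoin φ ψ = A.nabla ∧
    A.conMeet φ ψ = A.delta ∧ A.comp φ ψ = A.comp ψ φ

/-- Boolean congruences: complemented elements of the lattice `Con(A)`. -/
def IsBooleanCon (A : Alg σ) (φ : A.carrier → A.carrier → Prop) : Prop :=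
  A.IsCon φ ∧ ∃ ψ, A.IsCon ψ ∧ A.conJoin φ ψ = A.nabla ∧ A.conMeet φ ψ = A.delta

/-- `A` is congruence-distributive iff the lattice `Con(A)` is distributive. -/
def CongDistrib (A : Alg σ) : Prop :=
  ∀ r s t, A.IsCon r → A.IsCon s → A.IsCon t →
    A.conMeet r (A.conJoin s t) = A.conJoin (A.conMeet r s) (A.conMeet r t)

/-- `A` is congruence-permutable iff all congruences permute under composition. -/
def CongPermutable (A : Alg σ) : Prop :=
  ∀ r s, A.IsCon r → A.IsCon s → A.comp r s = A.comp s r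

/-- Arithmetical = congruence-distributive + congruence-permutable. -/
def Arithmetical (A : Alg σ) : Prop := A.CongDistrib ∧ A.CongPermutable

/-- The quotient algebra `A/θ`. -/
noncomputable def quotAlg (A : Alg σ) (θ : A.carrier → A.carrier → Prop) :
    Alg σ where
  carrier := Quot θ
  interp f x := Quot.mk θ (A.interp f fun i => (x i).out)

/-- The image `α/θ = {(a/θ, b/θ) : (a,b) ∈ α}` of a relation in the quotient. -/
def quotRel (A : Alg σ) (θ α : A.carrier → A.carrier → Prop) :
    Quot θ → Quot θ → Prop := fun x y =>
  ∃ a b, x = Quot.mk θ a ∧ y = Quot.mk θ b ∧ α a b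

/-- `θ` has the Factor Congruence Lifting Property: the Boolean morphism
`FC(θ) : FC(A) → FC(A/θ)`, `ψ ↦ (ψ ∨ θ)/θ`, is surjective. -/
def HasFCLP (A : Alg σ) (θ : A.carrier → A.carrier → Prop) : Prop :=
  ∀ γ, (A.quotAlg θ).IsFC γ →
    ∃ ψ, A.IsFC ψ ∧ A.quotRel θ (A.conJoin ψ θ) = γ

/-- `θ` has the Congruence Boolean Lifting Property: the Boolean morphism
`B(Con(A)) → B(Con(A/θ))`, `ψ ↦ (ψ ∨ θ)/θ`, is surjective. -/
def HasCBLP (A : Alg σ) (θ : A.carrier → A.carrier → Prop) : Prop :=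
  ∀ γ, (A.quotAlg θ).IsBooleanCon γ →
    ∃ ψ, A.IsBooleanCon ψ ∧ A.quotRel θ (A.conJoin ψ θ) = γ

/-- `A` has FCLP iff every congruence of `A` has FCLP. -/
def AlgFCLP (A : Alg σ) : Prop := ∀ θ, A.IsCon θ → A.HasFCLP θ

/-- `A` has CBLP iff every congruence of `A` has CBLP. -/
def AlgCBLP (A : Alg σ) : Prop := ∀ θ, A.IsCon θ → A.HasCBLP θ

/-- FC-normality. -/
def FCNormal (A : Alg σ) : Prop :=
  ∀ φ ψ, A.IsCon φ → A.IsCon ψ → A.comp φ ψ = A.nabla →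
    ∃ α β, A.IsFC α ∧ A.IsFC β ∧ A.conMeet α β = A.delta ∧
      A.comp φ α = A.nabla ∧ A.comp ψ β = A.nabla

/-- B-normality. -/
def BNormal (A : Alg σ) : Prop :=
  ∀ φ ψ, A.IsCon φ → A.IsCon ψ → A.conJoin φ ψ = A.nabla →
    ∃ α β, A.IsBooleanCon α ∧ A.IsBooleanCon β ∧ A.conMeet α β = A.delta ∧
      A.conJoin φ α = A.nabla ∧ A.conJoin ψ β = A.nabla

/-- Isomorphism of algebras. -/
def Iso (A B : Alg σ) : Prop :=
  ∃ e : A.carrier ≃ B.carrier,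
    ∀ (f : σ.ops) (x : Fin (σ.arity f) → A.carrier),
      e (A.interp f x) = B.interp f fun i => e (x i)

/-- Direct product of a finite family of algebras. -/
def prodAlg {n : ℕ} (B : Fin n → Alg σ) : Alg σ where
  carrier := ∀ i, (B i).carrier
  interp f x := fun i => (B i).interp f fun j => x j i

/-- The product congruence `θ₁ × … × θₙ`. -/
def prodRel {n : ℕ} (B : Fin n → Alg σ)
    (θ : ∀ i, (B i).carrier → (B i).carrier → Prop) :
    (prodAlg B).carrier → (prodAlg B).carrier → Prop :=
  fun x y => ∀ i, θ i (x i) (y i)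

/-- Maximal congruences: maximal elements of `(Con(A) \ {∇}, ⊆)`. -/
def IsMaxCon (A : Alg σ) (θ : A.carrier → A.carrier → Prop) : Prop :=
  A.IsCon θ ∧ θ ≠ A.nabla ∧
    ∀ ψ, A.IsCon ψ → ψ ≠ A.nabla → (∀ a b, θ a b → ψ a b) → ψ = θ

/-- Prime congruences. -/
def IsPrimeCon (A : Alg σ) (θ : A.carrier → A.carrier → Prop) : Prop :=
  A.IsCon θ ∧ ∀ α β, A.IsCon α → A.IsCon β →
    (∀ a b, α a b → β a b → θ a b) →
    (∀ a b, α a b → θ a b) ∨ ∀ a b, β a b → θ a b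

end Alg
section AuxLemmas

namespace Alg

variable {σ : Signature} {A : Alg σ}

theorem relext {α : Type} {r s : α → α → Prop} (h : ∀ a b, r a b ↔ s a b) : r = s :=
  funext fun a => funext fun b => propext (h a b)

theorem isCon_nabla : A.IsCon A.nabla :=
  ⟨⟨fun _ => trivial, fun _ => trivial, fun _ _ => trivial⟩, fun _ _ _ _ => trivial⟩

theorem isCon_conMeet {r s} (hr : A.IsCon r) (hs : A.IsCon s) :
    A.IsCon (A.conMeet r s) :=
  ⟨⟨fun a => ⟨hr.1.refl a, hs.1.refl a⟩, fun h => ⟨hr.1.symm h.1, hs.1.symm h.2⟩,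
    fun h h' => ⟨hr.1.trans h.1 h'.1, hs.1.trans h.2 h'.2⟩⟩,
   fun f x y h => ⟨hr.2 f x y fun i => (h i).1, hs.2 f x y fun i => (h i).2⟩⟩

theorem isCon_conJoin {r s} : A.IsCon (A.conJoin r s) :=
  ⟨⟨fun a t ht _ _ => ht.1.refl a,
    fun h t ht hr hs => ht.1.symm (h t ht hr hs),
    fun h h' t ht hr hs => ht.1.trans (h t ht hr hs) (h' t ht hr hs)⟩,
   fun f x y h t ht hr hs => ht.2 f x y fun i => h i t ht hr hs⟩

theorem le_conJoin_left {r s} {a b : A.carrier} (h : r a b) : A.conJoin r s a b :=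
  fun _ _ hr _ => hr a b h

theorem le_conJoin_right {r s} {a b : A.carrier} (h : s a b) : A.conJoin r s a b :=
  fun _ _ _ hs => hs a b h

theorem conJoin_le {r s t} (ht : A.IsCon t) (hr : ∀ a b, r a b → t a b)
    (hs : ∀ a b, s a b → t a b) {a b : A.carrier} (h : A.conJoin r s a b) : t a b :=
  h t ht hr hs

theorem conJoin_comm {r s} : A.conJoin r s = A.conJoin s r :=
  relext fun _ _ => ⟨fun h t ht hs hr => h t ht hr hs, fun h t ht hr hs => h t ht hs hr⟩

theorem conMeet_comm {r s} : A.conMeet r s = A.conMeet s r :=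
  relext fun _ _ => ⟨fun h => ⟨h.2, h.1⟩, fun h => ⟨h.2, h.1⟩⟩

theorem eq_nabla {r : A.carrier → A.carrier → Prop} (h : ∀ a b, r a b) :
    r = A.nabla :=
  relext fun a b => ⟨fun _ => trivial, fun _ => h a b⟩

theorem isCon_comp {r s} (hr : A.IsCon r) (hs : A.IsCon s)
    (hc : A.comp r s = A.comp s r) : A.IsCon (A.comp r s) := by
  constructor
  · constructor
    · exact fun a => ⟨a, hs.1.refl a, hr.1.refl a⟩
    · rintro a b ⟨x, hax, hxb⟩
      rw [hc]
      exact ⟨x, hr.1.symm hxb, hs.1.symm hax⟩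
    · rintro a b c ⟨x, hax, hxb⟩ ⟨y, hby, hyc⟩
      have h1 : A.comp r s x y := by rw [hc]; exact ⟨b, hxb, hby⟩
      obtain ⟨z, hxz, hzy⟩ := h1
      exact ⟨z, hs.1.trans hax hxz, hr.1.trans hzy hyc⟩
  · intro f x y h
    choose w h1 h2 using h
    exact ⟨A.interp f w, hs.2 f x w h1, hr.2 f w y h2⟩

theorem conJoin_eq_comp {r s} (hr : A.IsCon r) (hs : A.IsCon s)
    (hc : A.comp r s = A.comp s r) : A.conJoin r s = A.comp r s := by
  apply relext; intro a b
  constructor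
  · intro h
    exact h _ (isCon_comp hr hs hc) (fun x y hxy => ⟨x, hs.1.refl x, hxy⟩)
      (fun x y hxy => ⟨y, hxy, hr.1.refl y⟩)
  · rintro ⟨x, hax, hxb⟩ t ht hrt hst
    exact ht.1.trans (hst a x hax) (hrt x b hxb)

theorem isFC_iff (hp : A.CongPermutable) (φ : A.carrier → A.carrier → Prop) :
    A.IsFC φ ↔ A.IsBooleanCon φ :=
  ⟨fun ⟨h1, ψ, h2, h3, h4, _⟩ => ⟨h1, ψ, h2, h3, h4⟩,
   fun ⟨h1, ψ, h2, h3, h4⟩ => ⟨h1, ψ, h2, h3, h4, hp _ _ h1 h2⟩⟩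

/-! ### Quotient lemmas -/

theorem mk_eq_iff {θ} (hθ : A.IsCon θ) {a b : A.carrier} :
    Quot.mk θ a = Quot.mk θ b ↔ θ a b := by
  rw [Quot.eq]
  exact hθ.1.eqvGen_iff

theorem mk_interp {θ} (hθ : A.IsCon θ) (f : σ.ops)
    (a : Fin (σ.arity f) → A.carrier) :
    (A.quotAlg θ).interp f (fun i => Quot.mk θ (a i)) = Quot.mk θ (A.interp f a) := by
  show Quot.mk θ (A.interp f fun i => (Quot.mk θ (a i)).out) = Quot.mk θ (A.interp f a)
  exact Quot.sound (hθ.2 f _ _ fun i => (mk_eq_iff hθ).mp (Quot.out_eq _))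

/-- Pullback of a relation on the quotient. -/
def liftRel (A : Alg σ) (θ : A.carrier → A.carrier → Prop)
    (γ : Quot θ → Quot θ → Prop) : A.carrier → A.carrier → Prop :=
  fun a b => γ (Quot.mk θ a) (Quot.mk θ b)

theorem isCon_liftRel {θ γ} (hθ : A.IsCon θ) (hγ : (A.quotAlg θ).IsCon γ) :
    A.IsCon (A.liftRel θ γ) := by
  constructor
  · exact ⟨fun a => hγ.1.refl _, fun h => hγ.1.symm h, fun h h' => hγ.1.trans h h'⟩
  · intro f x y h
    have := hγ.2 f (fun i => Quot.mk θ (x i)) (fun i => Quot.mk θ (y i)) h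
    rwa [mk_interp hθ, mk_interp hθ] at this

theorem theta_le_liftRel {θ γ} (hγ : (A.quotAlg θ).IsCon γ) {a b : A.carrier}
    (h : θ a b) : A.liftRel θ γ a b := by
  show γ _ _
  rw [Quot.sound h]
  exact hγ.1.refl _

theorem quotRel_liftRel {θ γ} (hγ : (A.quotAlg θ).IsCon γ) :
    A.quotRel θ (A.liftRel θ γ) = γ := by
  apply relext; intro x y
  constructor
  · rintro ⟨a, b, rfl, rfl, h⟩
    exact h
  · intro h
    obtain ⟨a, ha⟩ := Quot.exists_rep x
    obtain ⟨b, hb⟩ := Quot.exists_rep y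
    refine ⟨a, b, ha.symm, hb.symm, ?_⟩
    show γ _ _
    rw [ha, hb]
    exact h

theorem quotRel_mk {θ φ} (hθ : A.IsCon θ) (hφ : A.IsCon φ)
    (hle : ∀ a b, θ a b → φ a b) {a b : A.carrier} :
    A.quotRel θ φ (Quot.mk θ a) (Quot.mk θ b) ↔ φ a b := by
  constructor
  · rintro ⟨a', b', ha, hb, h⟩
    have h1 : φ a a' := hle _ _ ((mk_eq_iff hθ).mp ha)
    have h2 : φ b' b := hle _ _ ((mk_eq_iff hθ).mp (hb.symm))
    exact hφ.1.trans (hφ.1.trans h1 h) h2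
  · exact fun h => ⟨a, b, rfl, rfl, h⟩

theorem liftRel_quotRel {θ φ} (hθ : A.IsCon θ) (hφ : A.IsCon φ)
    (hle : ∀ a b, θ a b → φ a b) : A.liftRel θ (A.quotRel θ φ) = φ :=
  relext fun _ _ => quotRel_mk hθ hφ hle

theorem quotRel_inj {θ φ ψ} (hθ : A.IsCon θ) (hφ : A.IsCon φ) (hψ : A.IsCon ψ)
    (hθφ : ∀ a b, θ a b → φ a b) (hθψ : ∀ a b, θ a b → ψ a b)
    (h : A.quotRel θ φ = A.quotRel θ ψ) : φ = ψ := by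
  rw [← liftRel_quotRel hθ hφ hθφ, h, liftRel_quotRel hθ hψ hθψ]

theorem isCon_quotRel {θ φ} (hθ : A.IsCon θ) (hφ : A.IsCon φ)
    (hle : ∀ a b, θ a b → φ a b) : (A.quotAlg θ).IsCon (A.quotRel θ φ) := by
  constructor
  · constructor
    · intro x
      obtain ⟨a, ha⟩ := Quot.exists_rep x
      exact ⟨a, a, ha.symm, ha.symm, hφ.1.refl a⟩
    · rintro x y ⟨a, b, rfl, rfl, h⟩
      exact ⟨b, a, rfl, rfl, hφ.1.symm h⟩
    · rintro x y z ⟨a, b, rfl, rfl, hab⟩ ⟨b', c, hb, rfl, hbc⟩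
      have : φ b b' := hle _ _ ((mk_eq_iff hθ).mp hb)
      exact ⟨a, c, rfl, rfl, hφ.1.trans (hφ.1.trans hab this) hbc⟩
  · intro f x y h
    choose a b hxa hyb hab using h
    have hx : x = fun i => Quot.mk θ (a i) := funext hxa
    have hy : y = fun i => Quot.mk θ (b i) := funext hyb
    rw [hx, hy, mk_interp hθ, mk_interp hθ]
    exact ⟨_, _, rfl, rfl, hφ.2 f a b hab⟩

theorem quotRel_theta {θ} (hθ : A.IsCon θ) :
    A.quotRel θ θ = (A.quotAlg θ).delta := by
  apply relext; intro x y
  constructor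
  · rintro ⟨a, b, rfl, rfl, h⟩
    exact Quot.sound h
  · rintro rfl
    obtain ⟨a, ha⟩ := Quot.exists_rep x
    exact ⟨a, a, ha.symm, ha.symm, hθ.1.refl a⟩

theorem quotRel_nabla {θ : A.carrier → A.carrier → Prop} :
    A.quotRel θ A.nabla = (A.quotAlg θ).nabla := by
  apply relext; intro x y
  refine ⟨fun _ => trivial, fun _ => ?_⟩
  obtain ⟨a, ha⟩ := Quot.exists_rep x
  obtain ⟨b, hb⟩ := Quot.exists_rep y
  exact ⟨a, b, ha.symm, hb.symm, trivial⟩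

theorem quotRel_conMeet {θ φ ψ} (hθ : A.IsCon θ) (hφ : A.IsCon φ) (hψ : A.IsCon ψ)
    (hθφ : ∀ a b, θ a b → φ a b) (hθψ : ∀ a b, θ a b → ψ a b) :
    A.quotRel θ (A.conMeet φ ψ) =
      (A.quotAlg θ).conMeet (A.quotRel θ φ) (A.quotRel θ ψ) := by
  apply relext; intro x y
  constructor
  · rintro ⟨a, b, rfl, rfl, h1, h2⟩
    exact ⟨⟨a, b, rfl, rfl, h1⟩, ⟨a, b, rfl, rfl, h2⟩⟩
  · rintro ⟨⟨a, b, rfl, rfl, h1⟩, ⟨a', b', ha, hb, h2⟩⟩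
    have haa : ψ a a' := hθψ _ _ ((mk_eq_iff hθ).mp ha)
    have hbb : ψ b' b := hθψ _ _ ((mk_eq_iff hθ).mp hb.symm)
    exact ⟨a, b, rfl, rfl, h1, hψ.1.trans (hψ.1.trans haa h2) hbb⟩

theorem quotRel_comp {θ φ ψ} (hθ : A.IsCon θ) (hφ : A.IsCon φ)
    (hθφ : ∀ a b, θ a b → φ a b) :
    A.quotRel θ (A.comp φ ψ) =
      (A.quotAlg θ).comp (A.quotRel θ φ) (A.quotRel θ ψ) := by
  apply relext; intro x y
  constructor
  · rintro ⟨a, b, rfl, rfl, w, h1, h2⟩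
    exact ⟨Quot.mk θ w, ⟨a, w, rfl, rfl, h1⟩, ⟨w, b, rfl, rfl, h2⟩⟩
  · rintro ⟨z, ⟨a, w, rfl, rfl, h1⟩, ⟨w', b, hw, rfl, h2⟩⟩
    have : φ w w' := hθφ _ _ ((mk_eq_iff hθ).mp hw)
    exact ⟨a, b, rfl, rfl, w, h1, hφ.1.trans this h2⟩

theorem quot_perm {θ} (hθ : A.IsCon θ) (hp : A.CongPermutable) :
    (A.quotAlg θ).CongPermutable := by
  intro γ δ hγ hδ
  have hγc := isCon_liftRel hθ hγ
  have hδc := isCon_liftRel hθ hδ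
  have hγθ := fun a b h => theta_le_liftRel (A := A) hγ (a := a) (b := b) h
  have hδθ := fun a b h => theta_le_liftRel (A := A) hδ (a := a) (b := b) h
  calc (A.quotAlg θ).comp γ δ
      = (A.quotAlg θ).comp (A.quotRel θ (A.liftRel θ γ)) (A.quotRel θ (A.liftRel θ δ)) := by
        rw [quotRel_liftRel hγ, quotRel_liftRel hδ]
    _ = (show (A.quotAlg θ).carrier → (A.quotAlg θ).carrier → Prop from A.quotRel θ (A.comp (A.liftRel θ γ) (A.liftRel θ δ))) :=
        (quotRel_comp hθ hγc hγθ).symm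
    _ = (show (A.quotAlg θ).carrier → (A.quotAlg θ).carrier → Prop from A.quotRel θ (A.comp (A.liftRel θ δ) (A.liftRel θ γ))) := by
        rw [hp _ _ hγc hδc]
    _ = (A.quotAlg θ).comp (A.quotRel θ (A.liftRel θ δ)) (A.quotRel θ (A.liftRel θ γ)) :=
        quotRel_comp hθ hδc hδθ
    _ = (A.quotAlg θ).comp δ γ := by rw [quotRel_liftRel hγ, quotRel_liftRel hδ]

theorem quotRel_conJoin {θ φ ψ} (hθ : A.IsCon θ) (hφ : A.IsCon φ) (hψ : A.IsCon ψ)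
    (hθφ : ∀ a b, θ a b → φ a b) (hθψ : ∀ a b, θ a b → ψ a b)
    (hp : A.CongPermutable) :
    A.quotRel θ (A.conJoin φ ψ) =
      (A.quotAlg θ).conJoin (A.quotRel θ φ) (A.quotRel θ ψ) := by
  rw [conJoin_eq_comp hφ hψ (hp _ _ hφ hψ), quotRel_comp hθ hφ hθφ,
    conJoin_eq_comp (isCon_quotRel hθ hφ hθφ) (isCon_quotRel hθ hψ hθψ)
      (quot_perm hθ hp _ _ (isCon_quotRel hθ hφ hθφ) (isCon_quotRel hθ hψ hθψ))]

end Alg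

end AuxLemmas
section MainLemmas

namespace Alg

variable {σ : Signature} {A : Alg σ}

theorem fclp_iff_cblp (hp : A.CongPermutable) : A.AlgFCLP ↔ A.AlgCBLP := by
  constructor
  · intro h θ hθ γ hγ
    obtain ⟨ψ, hψ, he⟩ := h θ hθ γ ((isFC_iff (quot_perm hθ hp) γ).mpr hγ)
    exact ⟨ψ, (isFC_iff hp ψ).mp hψ, he⟩
  · intro h θ hθ γ hγ
    obtain ⟨ψ, hψ, he⟩ := h θ hθ γ ((isFC_iff (quot_perm hθ hp) γ).mp hγ)
    exact ⟨ψ, (isFC_iff hp ψ).mpr hψ, he⟩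

theorem fcnormal_iff_bnormal (hp : A.CongPermutable) : A.FCNormal ↔ A.BNormal := by
  constructor
  · intro h φ ψ hφ hψ hj
    obtain ⟨α, β, hα, hβ, hm, h1, h2⟩ := h φ ψ hφ hψ
      (by rw [← conJoin_eq_comp hφ hψ (hp _ _ hφ hψ)]; exact hj)
    exact ⟨α, β, (isFC_iff hp α).mp hα, (isFC_iff hp β).mp hβ, hm,
      by rw [conJoin_eq_comp hφ hα.1 (hp _ _ hφ hα.1)]; exact h1,
      by rw [conJoin_eq_comp hψ hβ.1 (hp _ _ hψ hβ.1)]; exact h2⟩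
  · intro h φ ψ hφ hψ hj
    obtain ⟨α, β, hα, hβ, hm, h1, h2⟩ := h φ ψ hφ hψ
      (by rw [conJoin_eq_comp hφ hψ (hp _ _ hφ hψ)]; exact hj)
    exact ⟨α, β, (isFC_iff hp α).mpr hα, (isFC_iff hp β).mpr hβ, hm,
      by rw [← conJoin_eq_comp hφ hα.1 (hp _ _ hφ hα.1)]; exact h1,
      by rw [← conJoin_eq_comp hψ hβ.1 (hp _ _ hψ hβ.1)]; exact h2⟩

theorem bnormal_to_cblp (ha : A.Arithmetical) (hb : A.BNormal) : A.AlgCBLP := by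
  obtain ⟨hd, hp⟩ := ha
  intro θ hθ γ hγ
  obtain ⟨hγc, γ', hγ'c, hjγ, hmγ⟩ := hγ
  set φ := A.liftRel θ γ with hφdef
  set ψ := A.liftRel θ γ' with hψdef
  have hφc : A.IsCon φ := isCon_liftRel hθ hγc
  have hψc : A.IsCon ψ := isCon_liftRel hθ hγ'c
  have hθφ : ∀ a b, θ a b → φ a b := fun a b h => theta_le_liftRel hγc h
  have hθψ : ∀ a b, θ a b → ψ a b := fun a b h => theta_le_liftRel hγ'c h
  have hjoin : A.conJoin φ ψ = A.nabla := by
    apply quotRel_inj hθ isCon_conJoin isCon_nabla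
      (fun a b h => le_conJoin_left (hθφ a b h)) (fun _ _ _ => trivial)
    rw [quotRel_conJoin hθ hφc hψc hθφ hθψ hp, hφdef, hψdef,
      quotRel_liftRel hγc, quotRel_liftRel hγ'c, hjγ, quotRel_nabla]
  have hmeet : A.conMeet φ ψ = θ := by
    apply relext; intro a b
    constructor
    · intro h
      have hδ : (A.quotAlg θ).delta (Quot.mk θ a) (Quot.mk θ b) := by
        rw [← hmγ]; exact ⟨h.1, h.2⟩
      exact (mk_eq_iff hθ).mp hδ
    · intro h
      exact ⟨hθφ a b h, hθψ a b h⟩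
  obtain ⟨α, β, hα, hβ, hmαβ, hjφα, hjψβ⟩ := hb φ ψ hφc hψc hjoin
  have hβφ : ∀ a b, β a b → φ a b := by
    intro a b hab
    have h1 : A.conMeet β (A.conJoin φ α) a b := ⟨hab, by rw [hjφα]; trivial⟩
    rw [hd β φ α hβ.1 hφc hα.1] at h1
    refine conJoin_le hφc (fun x y h => h.2) (fun x y h => ?_) h1
    have hxy : A.delta x y := by rw [← hmαβ]; exact ⟨h.2, h.1⟩
    have hxy' : x = y := hxy
    rw [hxy']
    exact hφc.1.refl y
  have hφeq : φ = A.conJoin β θ := by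
    apply relext; intro a b
    constructor
    · intro hab
      have h1 : A.conMeet φ (A.conJoin ψ β) a b := ⟨hab, by rw [hjψβ]; trivial⟩
      rw [hd φ ψ β hφc hψc hβ.1, hmeet] at h1
      exact conJoin_le isCon_conJoin (fun x y h => le_conJoin_right h)
        (fun x y h => le_conJoin_left h.2) h1
    · intro h
      exact conJoin_le hφc hβφ hθφ h
  refine ⟨β, hβ, ?_⟩
  rw [← hφeq, hφdef]
  exact quotRel_liftRel hγc

theorem cblp_to_bnormal (hp : A.CongPermutable) (hc : A.AlgCBLP) : A.BNormal := by
  intro φ ψ hφ hψ hj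
  set θ := A.conMeet φ ψ with hθdef
  have hθ : A.IsCon θ := isCon_conMeet hφ hψ
  have hθφ : ∀ a b, θ a b → φ a b := fun _ _ h => h.1
  have hθψ : ∀ a b, θ a b → ψ a b := fun _ _ h => h.2
  have hγbool : (A.quotAlg θ).IsBooleanCon (A.quotRel θ φ) := by
    refine ⟨isCon_quotRel hθ hφ hθφ, A.quotRel θ ψ, isCon_quotRel hθ hψ hθψ, ?_, ?_⟩
    · rw [← quotRel_conJoin hθ hφ hψ hθφ hθψ hp, hj, quotRel_nabla]
    · rw [← quotRel_conMeet hθ hφ hψ hθφ hθψ, ← hθdef, quotRel_theta hθ]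
  obtain ⟨e, ⟨hec, e', he'c, hje, hme⟩, heq⟩ := hc θ hθ _ hγbool
  have heθφ : A.conJoin e θ = φ :=
    quotRel_inj hθ isCon_conJoin hφ (fun a b h => le_conJoin_right h) hθφ heq
  have heφ : ∀ a b, e a b → φ a b := fun a b h => by
    rw [← heθφ]; exact le_conJoin_left h
  have hj1 : A.conJoin φ e' = A.nabla := by
    apply eq_nabla; intro a b
    have h : A.conJoin e e' a b := by rw [hje]; trivial
    exact conJoin_le isCon_conJoin (fun x y hx => le_conJoin_left (heφ x y hx))
      (fun x y hx => le_conJoin_right hx) h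
  have hj2 : A.conJoin ψ e = A.nabla := by
    apply eq_nabla; intro a b
    have h : A.conJoin φ ψ a b := by rw [hj]; trivial
    refine conJoin_le isCon_conJoin (fun x y hx => ?_) (fun x y hx => le_conJoin_left hx) h
    rw [← heθφ] at hx
    exact conJoin_le isCon_conJoin (fun u v hu => le_conJoin_right hu)
      (fun u v hu => le_conJoin_left (hθψ u v hu)) hx
  exact ⟨e', e, ⟨he'c, e, hec, conJoin_comm.trans hje, conMeet_comm.trans hme⟩,
    ⟨hec, e', he'c, hje, hme⟩, conMeet_comm.trans hme, hj1, hj2⟩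

end Alg

end MainLemmas

/-- For an arithmetical algebra the following are equivalent:
FCLP, CBLP, FC-normality, B-normality. -/
theorem stmt_10 {σ : Signature} (A : Alg σ) (hne : Nonempty A.carrier)
    (ha : A.Arithmetical) :
    [A.AlgFCLP, A.AlgCBLP, A.FCNormal, A.BNormal].TFAE := by
  tfae_have 1 ↔ 2 := Alg.fclp_iff_cblp ha.2
  tfae_have 3 ↔ 4 := Alg.fcnormal_iff_bnormal ha.2
  tfae_have 2 → 4 := Alg.cblp_to_bnormal ha.2
  tfae_have 4 → 2 := Alg.bnormal_to_cblp ha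
  tfae_finish
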